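/- Let t ∈ ℝ with 0 < t < 1, F = 2√(t/(1−t²)), and define g₊(z) = −((1−t)/(2√t))·Re(U_F(z))·|W_F(z)|² and g₋(z) = −((1+t)/(2√t))·Im(U_F(z))·|W_F(z)|² on ℂ ∖ [−F,F]. Then for every φ ∈ (−π, π], at the point z₀ = a_t·cos φ + i·b_t·sin φ of the ellipse ∂E_t one has g₊(z₀) = −2(1−t)·cos φ/√(1+t²−2t·cos 2φ) and g₋(z₀) = 2(1+t)·sin φ/√(1+t²−2t·cos 2φ). -/

import Mathlib

open scoped Classical

/-- The real segment `[−F, F]` viewed as a subset of `ℂ`. -/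
def segC (F : ℝ) : Set ℂ := {z : ℂ | z.im = 0 ∧ -F ≤ z.re ∧ z.re ≤ F}

/-- `ℂ⁺`: the open right half-plane together with the nonnegative imaginary axis. -/
def Cplus : Set ℂ := {z : ℂ | 0 < z.re ∨ (z.re = 0 ∧ 0 ≤ z.im)}

/-- `U_F(z) = (z ∓ √(z²−F²))/F`, with `−` on `ℂ⁺` and `+` off `ℂ⁺`
(principal branch of the square root). -/
noncomputable def funU (F : ℝ) (z : ℂ) : ℂ :=
  if z ∈ Cplus then (z - (z ^ 2 - (F : ℂ) ^ 2) ^ ((1 : ℂ) / 2)) / F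
  else (z + (z ^ 2 - (F : ℂ) ^ 2) ^ ((1 : ℂ) / 2)) / F

/-- `T_F(z) = ±√(z²−F²)`, with `+` on `ℂ⁺` and `−` off `ℂ⁺`. -/
noncomputable def funT (F : ℝ) (z : ℂ) : ℂ :=
  if z ∈ Cplus then (z ^ 2 - (F : ℂ) ^ 2) ^ ((1 : ℂ) / 2)
  else -((z ^ 2 - (F : ℂ) ^ 2) ^ ((1 : ℂ) / 2))

/-- `W_F(z) = ((z+F)/(z−F))^{1/4} + ((z−F)/(z+F))^{1/4}` (principal fourth roots). -/
noncomputable def funW (F : ℝ) (z : ℂ) : ℂ :=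
  ((z + F) / (z - F)) ^ ((1 : ℂ) / 4) + ((z - F) / (z + F)) ^ ((1 : ℂ) / 4)

/-- The distance `F = 2√(t/(1−t²))` of the foci of the ellipse from the origin. -/
noncomputable def focF (t : ℝ) : ℝ := 2 * Real.sqrt (t / (1 - t ^ 2))

/-- The major semi-axis `a_t = √((1+t)/(1−t))`. -/
noncomputable def semiA (t : ℝ) : ℝ := Real.sqrt ((1 + t) / (1 - t))

/-- The minor semi-axis `b_t = √((1−t)/(1+t))`. -/
noncomputable def semiB (t : ℝ) : ℝ := Real.sqrt ((1 - t) / (1 + t))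

/-- The ellipse `∂E_t = {x+iy : x²/a_t² + y²/b_t² = 1}`. -/
def ellipseBd (t : ℝ) : Set ℂ :=
  {z : ℂ | z.re ^ 2 / semiA t ^ 2 + z.im ^ 2 / semiB t ^ 2 = 1}

/-- The open interior `E_t = {x+iy : x²/a_t² + y²/b_t² < 1}` of the ellipse. -/
def ellipseInt (t : ℝ) : Set ℂ :=
  {z : ℂ | z.re ^ 2 / semiA t ^ 2 + z.im ^ 2 / semiB t ^ 2 < 1}

/-- `g₊(z) = −((1−t)/(2√t))·Re(U_F(z))·|W_F(z)|²` with `F = 2√(t/(1−t²))`. -/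
noncomputable def gPlus (t : ℝ) (z : ℂ) : ℝ :=
  -((1 - t) / (2 * Real.sqrt t)) * (funU (focF t) z).re * ‖funW (focF t) z‖ ^ 2

/-- `g₋(z) = −((1+t)/(2√t))·Im(U_F(z))·|W_F(z)|²` with `F = 2√(t/(1−t²))`. -/
noncomputable def gMinus (t : ℝ) (z : ℂ) : ℝ :=
  -((1 + t) / (2 * Real.sqrt t)) * (funU (focF t) z).im * ‖funW (focF t) z‖ ^ 2

lemma cpow_half_mem : ∀ (w : ℂ), w ≠ 0 →
    (0 < (w ^ ((1:ℂ)/2)).re ∨ ((w ^ ((1:ℂ)/2)).re = 0 ∧ 0 < (w ^ ((1:ℂ)/2)).im)) := by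
  intro w hw
  rw [Complex.cpow_def_of_ne_zero hw]
  have hre : (Complex.log w * ((1:ℂ)/2)).im = w.arg / 2 := by
    simp [Complex.mul_im, Complex.log_im, Complex.log_re]
    ring
  rw [Complex.exp_re, Complex.exp_im, hre]
  have h1 : -(Real.pi/2) < w.arg / 2 := by have := Complex.neg_pi_lt_arg w; linarith
  have h2 : w.arg / 2 ≤ Real.pi/2 := by have := Complex.arg_le_pi w; linarith
  have hexp : 0 < Real.exp (Complex.log w * ((1:ℂ)/2)).re := Real.exp_pos _
  rcases lt_or_eq_of_le h2 with h2' | h2'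
  · left
    have : 0 < Real.cos (w.arg / 2) := Real.cos_pos_of_mem_Ioo ⟨h1, h2'⟩
    positivity
  · right
    rw [h2']
    simp only [Real.cos_pi_div_two, Real.sin_pi_div_two, mul_zero, mul_one, true_and]
    exact Real.exp_pos _

lemma cpow_half_eq {w v : ℂ} (hv : v ^ 2 = w)
    (h : 0 < v.re ∨ (v.re = 0 ∧ 0 ≤ v.im)) : w ^ ((1:ℂ)/2) = v := by
  rcases eq_or_ne w 0 with rfl | h0
  · have hv0 : v = 0 := by
      have := pow_eq_zero_iff (n := 2) (by norm_num) |>.mp hv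
      exact this
    simp [hv0, Complex.zero_cpow (by norm_num : (1:ℂ)/2 ≠ 0)]
  · have hu2 : (w ^ ((1:ℂ)/2)) ^ 2 = w := by
      rw [sq, ← Complex.cpow_add _ _ h0]
      norm_num
    have hmem := cpow_half_mem w h0
    set u := w ^ ((1:ℂ)/2) with hu
    have hvu : (v - u) * (v + u) = 0 := by
      have : v ^ 2 = u ^ 2 := by rw [hv, hu2]
      linear_combination this
    rcases mul_eq_zero.mp hvu with h' | h'
    · linear_combination -h'
    · exfalso
      have hvne : v = -u := by linear_combination h'
      rcases hmem with hm | ⟨hm1, hm2⟩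
      · rcases h with hh | ⟨hh, _⟩ <;> rw [hvne] at hh <;> simp at hh <;> linarith
      · rcases h with hh | ⟨_, hh⟩ <;> rw [hvne] at hh <;> simp at hh <;> linarith

set_option maxHeartbeats 1600000 in
/-- the values of `g₊` and `g₋` on the ellipse `∂E_t`: at
`z₀ = a_t·cos φ + i·b_t·sin φ` one has
`g₊(z₀) = −2(1−t)·cos φ/√(1+t²−2t·cos 2φ)` and
`g₋(z₀) = 2(1+t)·sin φ/√(1+t²−2t·cos 2φ)`. -/
theorem stmt11 (t : ℝ) (ht0 : 0 < t) (ht1 : t < 1) (φ : ℝ)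
    (hφ : φ ∈ Set.Ioc (-Real.pi) Real.pi) (z₀ : ℂ)
    (hz₀ : z₀ = (semiA t * Real.cos φ : ℝ) + Complex.I * (semiB t * Real.sin φ : ℝ)) :
    gPlus t z₀ = -(2 * (1 - t) * Real.cos φ) / Real.sqrt (1 + t ^ 2 - 2 * t * Real.cos (2 * φ)) ∧
    gMinus t z₀ = 2 * (1 + t) * Real.sin φ / Real.sqrt (1 + t ^ 2 - 2 * t * Real.cos (2 * φ)) := by
  set s := Real.sqrt t with hs_def
  have hs0 : 0 < s := Real.sqrt_pos.mpr ht0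
  have hs2 : s ^ 2 = t := Real.sq_sqrt ht0.le
  have hs1 : s < 1 := by nlinarith
  have h1t : (0:ℝ) < 1 - t ^ 2 := by nlinarith
  set d := Real.sqrt (1 - t ^ 2) with hd_def
  have hd0 : 0 < d := Real.sqrt_pos.mpr h1t
  have hd2 : d ^ 2 = 1 - t ^ 2 := Real.sq_sqrt h1t.le
  set cφ := Real.cos φ with hc_def
  set sφ := Real.sin φ with hsin_def
  have htrig : cφ ^ 2 + sφ ^ 2 = 1 := by
    rw [hc_def, hsin_def, add_comm]; exact Real.sin_sq_add_cos_sq φ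
  have hF : focF t = 2 * s / d := by
    rw [focF, Real.sqrt_div ht0.le, mul_div_assoc]
  have ht1' : (1:ℝ) - t ≠ 0 := by linarith
  have ht1'' : (1:ℝ) + t ≠ 0 := by linarith
  have ht2' : (1:ℝ) - t ^ 2 ≠ 0 := h1t.ne'
  have ha : semiA t = (1 + t) / d := by
    rw [semiA, show (1+t)/(1-t) = (1+t)^2/(1-t^2) by
      field_simp; ring, Real.sqrt_div (sq_nonneg _), Real.sqrt_sq (by linarith)]
  have hb : semiB t = (1 - t) / d := by
    rw [semiB, show (1-t)/(1+t) = (1-t)^2/(1-t^2) by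
      field_simp; ring, Real.sqrt_div (sq_nonneg _), Real.sqrt_sq (by linarith)]
  clear_value s d cφ sφ
  have hdC : (d:ℂ) ≠ 0 := by exact_mod_cast hd0.ne'
  have hsC : (s:ℂ) ≠ 0 := by exact_mod_cast hs0.ne'
  have hd2C : (d:ℂ) ^ 2 = 1 - (t:ℂ) ^ 2 := by exact_mod_cast hd2
  have hs2C : (s:ℂ) ^ 2 = (t:ℂ) := by exact_mod_cast hs2
  have htrigC : (cφ:ℂ) ^ 2 + (sφ:ℂ) ^ 2 = 1 := by exact_mod_cast htrig
  set T₀ : ℂ := (((1 - t) * cφ / d : ℝ) : ℂ) + Complex.I * (((1 + t) * sφ / d : ℝ) : ℂ)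
    with hT₀_def
  clear_value T₀
  have key : (((1 - t) * cφ : ℂ) + Complex.I * ((1 + t) * sφ)) ^ 2 + 4 * t
      = (((1 + t) * cφ : ℂ) + Complex.I * ((1 - t) * sφ)) ^ 2 := by
    linear_combination (-4*(t:ℂ)) * htrigC + (4*(t:ℂ)*(sφ:ℂ)^2) * Complex.I_sq
  have hz : z₀ = (((1 + t) * cφ : ℂ) + Complex.I * ((1 - t) * sφ)) / d := by
    rw [hz₀, ha, hb]
    push_cast
    field_simp
  have hT₀C : T₀ = (((1 - t) * cφ : ℂ) + Complex.I * ((1 + t) * sφ)) / d := by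
    rw [hT₀_def]
    push_cast
    field_simp
  have hFC : ((focF t : ℝ) : ℂ) = 2 * (s:ℂ) / d := by
    rw [hF]; push_cast; ring
  have hT : T₀ ^ 2 = z₀ ^ 2 - ((focF t : ℝ) : ℂ) ^ 2 := by
    rw [hz, hT₀C, hFC, div_pow, div_pow, div_pow, div_sub_div_same]
    congr 1
    linear_combination key + 4 * hs2C
  have hzre : z₀.re = (1 + t) * cφ / d := by
    rw [hz₀, ha]; simp; ring
  have hzim : z₀.im = (1 - t) * sφ / d := by
    rw [hz₀, hb]; simp; ring
  have hT₀re : T₀.re = (1 - t) * cφ / d := by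
    rw [hT₀_def]; simp
  have hT₀im : T₀.im = (1 + t) * sφ / d := by
    rw [hT₀_def]; simp
  have hsgn : ∀ k x : ℝ, 0 < k →
      ((0 < k * x / d ↔ 0 < x) ∧ (k * x / d = 0 ↔ x = 0) ∧ (0 ≤ k * x / d ↔ 0 ≤ x)) := by
    intro k x hk
    have hkd : 0 < k / d := div_pos hk hd0
    rw [show k * x / d = (k / d) * x by ring]
    refine ⟨⟨fun h => ?_, fun h => mul_pos hkd h⟩, ?_, ⟨fun h => ?_, fun h => mul_nonneg hkd.le h⟩⟩
    · nlinarith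
    · simp [mul_eq_zero, hkd.ne']
    · nlinarith
  have h1tp : (0:ℝ) < 1 + t := by linarith
  have h1tp' : (0:ℝ) < 1 - t := by linarith
  have hiff : z₀ ∈ Cplus ↔ (0 < T₀.re ∨ (T₀.re = 0 ∧ 0 ≤ T₀.im)) := by
    simp only [Cplus, Set.mem_setOf_eq, hzre, hzim, hT₀re, hT₀im]
    rw [(hsgn _ cφ h1tp).1, (hsgn _ cφ h1tp).2.1, (hsgn _ sφ h1tp').2.2,
      (hsgn _ cφ h1tp').1, (hsgn _ cφ h1tp').2.1, (hsgn _ sφ h1tp).2.2]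
  have hU : funU (focF t) z₀ = (z₀ - T₀) / ((focF t : ℝ) : ℂ) := by
    rw [funU]
    split_ifs with hmem
    · rw [cpow_half_eq hT (hiff.mp hmem)]
    · have hnot := hiff.not.mp hmem
      push_neg at hnot
      have hcond : 0 < (-T₀).re ∨ ((-T₀).re = 0 ∧ 0 ≤ (-T₀).im) := by
        rcases lt_or_eq_of_le hnot.1 with h' | h'
        · left; simp only [Complex.neg_re]; linarith
        · right
          have him := hnot.2 h'.symm.symm
          constructor
          · simp only [Complex.neg_re]; linarith
          · simp only [Complex.neg_im]; linarith
      rw [cpow_half_eq (show (-T₀) ^ 2 = z₀ ^ 2 - ((focF t : ℝ) : ℂ) ^ 2 from by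
        rw [neg_sq]; exact hT) hcond]
      ring
  have hUval : funU (focF t) z₀ = ((s * cφ : ℝ) : ℂ) + Complex.I * ((-(s * sφ) : ℝ) : ℂ) := by
    rw [hU, hz, hT₀C, hFC]
    push_cast
    field_simp
    linear_combination (-2 * (cφ:ℂ) + 2 * Complex.I * (sφ:ℂ)) * hs2C
  have hUre : (funU (focF t) z₀).re = s * cφ := by rw [hUval]; simp
  have hUim : (funU (focF t) z₀).im = -(s * sφ) := by rw [hUval]; simp
  obtain ⟨N, hN_def⟩ : ∃ N : ℝ, N = 1 + t ^ 2 - 2 * t * Real.cos (2 * φ) := ⟨_, rfl⟩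
  have hNval : N = (1 - t) ^ 2 + 4 * t * sφ ^ 2 := by
    rw [hN_def, Real.cos_two_mul, ← hc_def]

    linear_combination (-4 * t) * htrig
  have hN0 : 0 < N := by
    rw [hNval]
    have h1 : 0 < (1 - t) ^ 2 := pow_pos (by linarith) 2
    have h2 : 0 ≤ 4 * t * sφ ^ 2 := by positivity
    linarith
  obtain ⟨D, hD_def⟩ : ∃ D : ℝ, D = 1 - 2 * s * cφ + t := ⟨_, rfl⟩
  have hD0 : 0 < D := by
    have hc1 : cφ ≤ 1 := hc_def ▸ Real.cos_le_one φ
    have hDe : D = (1 - s) ^ 2 + 2 * s * (1 - cφ) := by rw [hD_def, ← hs2]; ring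
    have h1 : 0 < (1 - s) ^ 2 := pow_pos (by linarith) 2
    have h2 : 0 ≤ 2 * s * (1 - cφ) := mul_nonneg (by positivity) (by linarith)
    linarith
  have hDC : (D:ℂ) ≠ 0 := by exact_mod_cast hD0.ne'
  have hDCeq : (D:ℂ) = 1 - 2 * (s:ℂ) * cφ + t := by rw [hD_def]; push_cast; ring
  obtain ⟨r, hr_def⟩ : ∃ r : ℂ, r = (((1 - t) / D : ℝ) : ℂ) + Complex.I * ((-(2 * s * sφ) / D : ℝ) : ℂ) := ⟨_, rfl⟩
  have hrre : r.re = (1 - t) / D := by simp [hr_def]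
  have hrim : r.im = -(2 * s * sφ) / D := by simp [hr_def]
  have hrpos : 0 < r.re := by rw [hrre]; exact div_pos h1tp' hD0
  have hrC : r = ((1 - (t:ℂ)) + Complex.I * (-(2 * (s:ℂ) * sφ))) / (D:ℂ) := by
    rw [hr_def]; push_cast; ring
  have hT₀ne : T₀ ≠ 0 := by
    intro h0
    have h1 : T₀.re = 0 := by rw [h0]; simp
    have h2 : T₀.im = 0 := by rw [h0]; simp
    rw [hT₀re] at h1
    rw [hT₀im] at h2
    have hc0 : cφ = 0 := ((hsgn _ cφ h1tp').2.1).mp h1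
    have hs0' : sφ = 0 := ((hsgn _ sφ h1tp).2.1).mp h2
    rw [hc0, hs0'] at htrig
    norm_num at htrig
  have hprod : (z₀ - ((focF t : ℝ) : ℂ)) * (z₀ + ((focF t : ℝ) : ℂ)) = T₀ ^ 2 := by
    linear_combination -hT
  have hT₀sq : T₀ ^ 2 ≠ 0 := pow_ne_zero 2 hT₀ne
  have hzFm : z₀ - ((focF t : ℝ) : ℂ) ≠ 0 := by
    intro h0; apply hT₀sq; rw [← hprod, h0, zero_mul]
  have hzFp : z₀ + ((focF t : ℝ) : ℂ) ≠ 0 := by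
    intro h0; apply hT₀sq; rw [← hprod, h0, mul_zero]
  obtain ⟨q, hq_def⟩ : ∃ q : ℂ, q = (z₀ + ((focF t : ℝ) : ℂ)) / (z₀ - ((focF t : ℝ) : ℂ)) := ⟨_, rfl⟩
  have hzp : z₀ + ((focF t : ℝ) : ℂ)
      = (((1 + (t:ℂ)) * cφ + 2 * (s:ℂ)) + Complex.I * ((1 - (t:ℂ)) * sφ)) / (d:ℂ) := by
    rw [hz, hFC, ← add_div]
    congr 1
    ring
  have hzm : z₀ - ((focF t : ℝ) : ℂ)
      = (((1 + (t:ℂ)) * cφ - 2 * (s:ℂ)) + Complex.I * ((1 - (t:ℂ)) * sφ)) / (d:ℂ) := by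
    rw [hz, hFC, div_sub_div_same]
    congr 1
    ring
  have hB : (((1 + (t:ℂ)) * cφ - 2 * (s:ℂ)) + Complex.I * ((1 - (t:ℂ)) * sφ)) ≠ 0 := by
    intro h0; apply hzFm; rw [hzm, h0, zero_div]
  have hq : q = r ^ 2 := by
    have hQ : q = (((1 + (t:ℂ)) * cφ + 2 * (s:ℂ)) + Complex.I * ((1 - (t:ℂ)) * sφ))
        / (((1 + (t:ℂ)) * cφ - 2 * (s:ℂ)) + Complex.I * ((1 - (t:ℂ)) * sφ)) := by
      rw [hq_def, hzp, hzm]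
      rw [div_div_div_comm, div_self hdC, div_one]
    rw [hQ, hrC, div_pow, div_eq_div_iff hB (pow_ne_zero 2 hDC), hDCeq]
    linear_combination (-1 : ℂ) * ((-4*(s:ℂ)*(sφ:ℂ)^2 + 8*(s:ℂ)*(sφ:ℂ)^2*(t:ℂ) - 4*(s:ℂ)*(sφ:ℂ)^2*(t:ℂ)^2 + 4*(s:ℂ)^2*(cφ:ℂ)*(sφ:ℂ)^2 + 4*(s:ℂ)^2*(cφ:ℂ)*(sφ:ℂ)^2*(t:ℂ) - 8*(s:ℂ)^3*(sφ:ℂ)^2 + 4*Complex.I*(s:ℂ)^2*(sφ:ℂ)^3 - 4*Complex.I*(s:ℂ)^2*(sφ:ℂ)^3*(t:ℂ)) * Complex.I_sq + (8*(cφ:ℂ) + 8*(cφ:ℂ)*(t:ℂ) - 4*(cφ:ℂ)*(sφ:ℂ)^2 - 4*(cφ:ℂ)*(sφ:ℂ)^2*(t:ℂ) - 4*(cφ:ℂ)^3 - 4*(cφ:ℂ)^3*(t:ℂ) + 8*(s:ℂ)*(sφ:ℂ)^2 - 8*(s:ℂ)*(cφ:ℂ)^2 + 8*Complex.I*(sφ:ℂ)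 - 8*Complex.I*(sφ:ℂ)*(t:ℂ) - 4*Complex.I*(sφ:ℂ)^3 + 4*Complex.I*(sφ:ℂ)^3*(t:ℂ) - 4*Complex.I*(cφ:ℂ)^2*(sφ:ℂ) + 4*Complex.I*(cφ:ℂ)^2*(sφ:ℂ)*(t:ℂ)) * hs2C + (-4*(cφ:ℂ)*(t:ℂ) - 4*(cφ:ℂ)*(t:ℂ)^2 + 4*(s:ℂ) + 4*(s:ℂ)*(t:ℂ)^2 - 4*Complex.I*(sφ:ℂ)*(t:ℂ) + 4*Complex.I*(sφ:ℂ)*(t:ℂ)^2) * htrigC)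
  have hr0 : r ≠ 0 := by
    intro h0; rw [h0] at hrpos; simp at hrpos
  have hq0 : q ≠ 0 := by rw [hq]; exact pow_ne_zero 2 hr0
  have hargq : q.arg ≠ Real.pi := by
    intro h0
    have hh := Complex.arg_eq_pi_iff.mp h0
    have him : q.im = 0 := hh.2
    have hre : q.re < 0 := hh.1
    rw [hq, sq, Complex.mul_im] at him
    have hrim0 : r.im = 0 := by nlinarith [hrpos]
    rw [hq, sq, Complex.mul_re, hrim0] at hre
    nlinarith [hrpos]
  obtain ⟨u, hu_def⟩ : ∃ u : ℂ, u = q ^ ((1:ℂ)/4) := ⟨_, rfl⟩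
  have hu2 : u ^ 2 = r := by
    rw [hu_def, sq, ← Complex.cpow_add _ _ hq0, show (1:ℂ)/4 + 1/4 = 1/2 by norm_num]
    exact cpow_half_eq hq.symm (Or.inl hrpos)
  have hu0 : u ≠ 0 := by
    intro h0
    rw [h0] at hu2
    rw [← hu2] at hr0
    simp at hr0
  have hW : funW (focF t) z₀ = (r + 1) / u := by
    rw [funW]
    have h2 : (z₀ - ((focF t : ℝ) : ℂ)) / (z₀ + ((focF t : ℝ) : ℂ)) = q⁻¹ := by
      rw [hq_def, inv_div]
    rw [← hq_def, h2, Complex.inv_cpow _ _ hargq, ← hu_def, ← hu2]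
    field_simp
  have habsu : ‖u‖ ^ 2 = ‖r‖ := by
    rw [← norm_pow, hu2]
  have hr1 : ‖r + 1‖ ^ 2 = 4 / D := by
    rw [Complex.sq_norm, Complex.normSq_apply, Complex.add_re, Complex.add_im, hrre, hrim,
      Complex.one_re, Complex.one_im, hD_def]
    have hDne : (1 : ℝ) - 2 * s * cφ + t ≠ 0 := by rw [← hD_def]; exact hD0.ne'
    field_simp
    linear_combination (4 * s ^ 2) * htrig + 4 * hs2
  have hnormr : Complex.normSq r = N / D ^ 2 := by
    rw [Complex.normSq_apply, hrre, hrim, hNval]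
    have hDne : D ≠ 0 := hD0.ne'
    field_simp
    linear_combination (4 * sφ ^ 2) * hs2
  have habsr : ‖r‖ = Real.sqrt N / D := by
    rw [Complex.norm_def, hnormr, Real.sqrt_div hN0.le, Real.sqrt_sq hD0.le]
  have hsN : (0:ℝ) < Real.sqrt N := Real.sqrt_pos.mpr hN0
  have habsW : ‖funW (focF t) z₀‖ ^ 2 = 4 / Real.sqrt N := by
    rw [hW, norm_div, div_pow, habsu, hr1, habsr]
    rw [div_div_div_comm, div_self hD0.ne', div_one]
  constructor
  · rw [gPlus, hUre, habsW, ← hs_def, ← hN_def]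
    field_simp
    ring
  · rw [gMinus, hUim, habsW, ← hs_def, ← hN_def]
    field_simp
    ring
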